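/- Let γ: [0,∞) → [0,∞) be continuous, strictly increasing with γ(0)=0 and γ(x) ≤ C x^{1+r} for all x ∈ [0,1], with r > 0 and C > 0. Then with μ = 2^{1+r} C, there exists α > 0 such that for all 0 ≤ x ≤ α, 2L x + (x/μ)^{1/(1+r)} ≤ γ⁻¹(x), for any fixed Lipschitz constant L ≥ 1/2 (where α can be taken of order (L^{1+r} C)^{-1/r} up to absolute constants). -/

import Mathlib

/-- Class-K function: continuous, strictly increasing on `[0,∞)`, vanishing at `0`. -/
def ClassK (γ : ℝ → ℝ) : Prop :=
  ContinuousOn γ (Set.Ici 0) ∧ StrictMonoOn γ (Set.Ici 0) ∧ γ 0 = 0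

/-- Explicit constant computation for rapidly decaying class-K gains: if
`γ(x) ≤ C x^{1+r}` on `[0,1]`, then with `μ = 2^{1+r} C` there is `α > 0` such that
`2 L x + (x/μ)^{1/(1+r)} ≤ γ⁻¹(x)` for all `0 ≤ x ≤ α` and any `L ≥ 1/2`.
The inequality `... ≤ γ⁻¹(x)` is expressed as: for every `y ≥ 0` with `γ y = x`,
`2 L x + (x/μ)^{1/(1+r)} ≤ y`. -/
theorem stmt1 (γ : ℝ → ℝ) (C r L : ℝ)
    (hK : ClassK γ) (hC : 0 < C) (hr : 0 < r) (hL : 1 / 2 ≤ L)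
    (hγ : ∀ x : ℝ, 0 ≤ x → x ≤ 1 → γ x ≤ C * x ^ (1 + r)) :
    ∃ α > 0, ∀ x : ℝ, 0 ≤ x → x ≤ α → ∀ y : ℝ, 0 ≤ y → γ y = x →
      2 * L * x + (x / (2 ^ (1 + r) * C)) ^ (1 / (1 + r)) ≤ y := by
  obtain ⟨hcont, hmono, hzero⟩ := hK
  have hLpos : (0:ℝ) < L := by linarith
  have h4L : (0:ℝ) < 4 * L := by linarith
  have h1r : (0:ℝ) < 1 + r := by linarith
  have h1r' : (1:ℝ) + r ≠ 0 := ne_of_gt h1r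
  have hγ1 : 0 < γ 1 := by
    have := hmono (Set.mem_Ici.2 le_rfl) (Set.mem_Ici.2 zero_le_one) zero_lt_one
    rwa [hzero] at this
  have hD : (0:ℝ) < C * (4 * L) ^ (1 + r) :=
    mul_pos hC (Real.rpow_pos_of_pos h4L _)
  set B : ℝ := ((C * (4 * L) ^ (1 + r))⁻¹) ^ r⁻¹ with hB
  have hBpos : 0 < B := Real.rpow_pos_of_pos (inv_pos.2 hD) _
  refine ⟨min B (γ 1), lt_min hBpos hγ1, ?_⟩
  intro x hx hxα y hy hxy
  have hxB : x ≤ B := hxα.trans (min_le_left _ _)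
  have hxγ1 : x ≤ γ 1 := hxα.trans (min_le_right _ _)
  -- y ≤ 1
  have hy1 : y ≤ 1 := by
    by_contra h
    push_neg at h
    have := hmono (Set.mem_Ici.2 zero_le_one) (Set.mem_Ici.2 hy) h
    rw [hxy] at this
    linarith
  rcases eq_or_lt_of_le hx with hx0 | hxpos
  · -- x = 0 case
    rw [← hx0]
    rw [zero_div, Real.zero_rpow (by positivity)]
    simpa using hy
  -- main case: 0 < x
  have hxC : x ≤ C * y ^ (1 + r) := hxy ▸ hγ y hy hy1
  have hxCy : x / C ≤ y ^ (1 + r) := (div_le_iff₀' hC).2 hxC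
  have hyx : (x / C) ^ (1 / (1 + r)) ≤ y := by
    have := Real.rpow_le_rpow (by positivity) hxCy (by positivity : (0:ℝ) ≤ 1 / (1 + r))
    rw [one_div] at this ⊢
    rwa [Real.rpow_rpow_inv hy h1r'] at this
  -- x^r ≤ (C (4L)^{1+r})⁻¹
  have hxr : x ^ r ≤ (C * (4 * L) ^ (1 + r))⁻¹ := by
    have := Real.rpow_le_rpow hx hxB hr.le
    rwa [hB, Real.rpow_inv_rpow (by positivity) (ne_of_gt hr)] at this
  -- (4 L x)^{1+r} ≤ x / C
  have hkey : (4 * L * x) ^ (1 + r) ≤ x / C := by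
    rw [Real.mul_rpow h4L.le hx, Real.rpow_add hxpos, Real.rpow_one]
    calc (4 * L) ^ (1 + r) * (x * x ^ r)
        ≤ (4 * L) ^ (1 + r) * (x * (C * (4 * L) ^ (1 + r))⁻¹) :=
          mul_le_mul_of_nonneg_left (mul_le_mul_of_nonneg_left hxr hx)
            (Real.rpow_pos_of_pos h4L _).le
      _ = x / C := by
          field_simp
  have h4Lx : 4 * L * x ≤ (x / C) ^ (1 / (1 + r)) := by
    have := Real.rpow_le_rpow (by positivity) hkey (by positivity : (0:ℝ) ≤ 1 / (1 + r))
    rw [one_div] at this ⊢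
    rwa [Real.rpow_rpow_inv (by positivity) h1r'] at this
  -- rewrite the μ-term
  have hμ : (x / (2 ^ (1 + r) * C)) ^ (1 / (1 + r)) = (x / C) ^ (1 / (1 + r)) / 2 := by
    have h2 : ((2:ℝ) ^ (1 + r)) ^ (1 / (1 + r)) = 2 := by
      rw [one_div, Real.rpow_rpow_inv (by norm_num) h1r']
    rw [show x / (2 ^ (1 + r) * C) = (x / C) / 2 ^ (1 + r) by ring,
      Real.div_rpow (by positivity) (by positivity), h2]
  rw [hμ]
  linarith
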